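/- Let a ∈ ℂ with a ≠ 0 and a² ≠ 1. The pfaffian of the 4×4 skew-symmetric matrix Ω with entries Ω₁₂ = 1/(1/a - a), Ω₁₃ = -1/a, Ω₁₄ = -1, Ω₂₃ = -a, Ω₂₄ = -1, Ω₃₄ = -1 (and Ω_{ji} = -Ω_{ij}, Ω_{ii} = 0) equals (a⁴ - a² + 1)/(a(a² - 1)). In particular, the pfaffian vanishes if and only if a⁴ - a² + 1 = 0. -/

import Mathlib

/-- The pfaffian Ω₁₂Ω₃₄ - Ω₁₃Ω₂₄ + Ω₁₄Ω₂₃ of the skew form on the sphere with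
four ends {a, 1/a, 0, ∞} equals (a⁴ - a² + 1)/(a(a² - 1)), and it vanishes
iff a⁴ - a² + 1 = 0. -/
theorem pfaffian_four_ends (a : ℂ) (ha : a ≠ 0) (ha2 : a ^ 2 ≠ 1) :
    (1 / (1 / a - a)) * (-1) - (-1 / a) * (-1) + (-1) * (-a)
      = (a ^ 4 - a ^ 2 + 1) / (a * (a ^ 2 - 1)) ∧
    ((1 / (1 / a - a)) * (-1) - (-1 / a) * (-1) + (-1) * (-a) = 0 ↔
      a ^ 4 - a ^ 2 + 1 = 0) := by
  have h1 : a ^ 2 - 1 ≠ 0 := sub_ne_zero.mpr ha2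
  have h2 : a * (a ^ 2 - 1) ≠ 0 := mul_ne_zero ha h1
  have h3 : 1 / a - a ≠ 0 := by
    intro h
    apply h1
    have := congrArg (· * a) h
    field_simp at this
    linear_combination -this
  have h4 : 1 - a ^ 2 ≠ 0 := fun h => h1 (by linear_combination -h)
  have key : (1 / (1 / a - a)) * (-1) - (-1 / a) * (-1) + (-1) * (-a)
      = (a ^ 4 - a ^ 2 + 1) / (a * (a ^ 2 - 1)) := by
    have h5 : (1 - a ^ 2) * (1 - a ^ 2)⁻¹ = 1 := mul_inv_cancel₀ h4
    field_simp
    linear_combination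
  refine ⟨key, ?_⟩
  rw [key, div_eq_zero_iff]
  simp [h2]
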